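/- Let V be finite, b a vertex, a != b with p(b,a)=1, and k(v) = E_v[T_b] the expected hitting time of b. Define K_2 := max_v k(v) + (1/2) sum_{u != b, v in V} d(u) p(u,v) |k(u)-k(v)-1|. Then for any rotor walk started at a and any t with n_t(b)>0, |(k(a)+1) - t/n_t(b)| <= K_2/n_t(b). -/

import Mathlib

open scoped BigOperators Classical

/-- `(x, r)` is a rotor walk for the rotor mechanism `(d, succ)`.  Rotor values are
`0`-based: rotor value `j` at `u` means the rotor points to `succ u j`
(corresponding to `u^(j+1)` in `1`-based notation).  At each step the rotor at the
current particle position is incremented cyclically and the particle moves in the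
new rotor direction. -/
def IsRotorWalk {V : Type*} (d : V → ℕ) (succ : V → ℕ → V)
    (x : ℕ → V) (r : ℕ → V → ℕ) : Prop :=
  (∀ v, r 0 v < d v) ∧
  (∀ t, r (t + 1) (x t) = (r t (x t) + 1) % d (x t)) ∧
  (∀ t v, v ≠ x t → r (t + 1) v = r t v) ∧
  (∀ t, x (t + 1) = succ (x t) (r (t + 1) (x t)))

/-- the number of visits of the walk `x` to `v` strictly before time `t` -/
noncomputable def nvisits {V : Type*} (x : ℕ → V) (t : ℕ) (v : V) : ℕ :=
  ((Finset.range t).filter fun s => x s = v).card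

/-- the rotor mechanism `(d, succ)` realizes the transition kernel `p`:
`p u v` is the proportion of the `d u` successors of `u` equal to `v` -/
def Realizes {V : Type*} (d : V → ℕ) (succ : V → ℕ → V) (p : V → V → ℝ) : Prop :=
  (∀ u, 0 < d u) ∧
  ∀ u v, p u v = ((Finset.range (d u)).filter fun i => succ u i = v).card / d u


lemma aux_mod_shift (n c m : ℕ) (hn : 0 < n) : (c + m + (n - c % n)) % n = m % n := by
  have h1 : c % n + n * (c / n) = c := Nat.mod_add_div c n
  have h2 : c % n < n := Nat.mod_lt _ hn
  have h4 : n * (c / n + 1) = n * (c / n) + n := by ring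
  have h3 : c + m + (n - c % n) = m + n * (c / n + 1) := by omega
  rw [h3, Nat.add_mul_mod_self_left]

lemma sum_range_mod_shift (n c : ℕ) (hn : 0 < n) (h : ℕ → ℝ) :
    ∑ i ∈ Finset.range n, h ((c + i) % n) = ∑ j ∈ Finset.range n, h j := by
  refine Finset.sum_nbij' (fun i => (c + i) % n) (fun j => (j + (n - c % n)) % n) ?_ ?_ ?_ ?_ ?_
  · intro i hi; exact Finset.mem_range.mpr (Nat.mod_lt _ hn)
  · intro j hj; exact Finset.mem_range.mpr (Nat.mod_lt _ hn)
  · intro i hi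
    simp only [Finset.mem_range] at hi
    rw [Nat.mod_add_mod, aux_mod_shift n c i hn, Nat.mod_eq_of_lt hi]
  · intro j hj
    simp only [Finset.mem_range] at hj
    rw [Nat.add_mod_mod, ← Nat.add_assoc, aux_mod_shift n c j hn, Nat.mod_eq_of_lt hj]
  · intro i hi; rfl

lemma nvisits_succ {V : Type*} (x : ℕ → V) (s : ℕ) (v : V) :
    nvisits x (s+1) v = nvisits x s v + (if x s = v then 1 else 0) := by
  unfold nvisits
  rw [Finset.range_add_one, Finset.filter_insert]
  split_ifs with h
  · rw [Finset.card_insert_of_notMem (by simp)]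
  · simp

lemma nvisits_zero {V : Type*} (x : ℕ → V) (v : V) : nvisits x 0 v = 0 := by
  simp [nvisits]

lemma realizes_sum {V : Type*} [Fintype V] (d : V → ℕ) (succ : V → ℕ → V) (p : V → V → ℝ)
    (hd : ∀ u, 0 < d u)
    (hp : ∀ u v, p u v = ((Finset.range (d u)).filter fun i => succ u i = v).card / d u)
    (u : V) (g : V → ℝ) :
    ∑ v, p u v * g v = (∑ i ∈ Finset.range (d u), g (succ u i)) / d u := by
  have h1 : ∑ i ∈ Finset.range (d u), g (succ u i)
      = ∑ v : V, ∑ i ∈ (Finset.range (d u)).filter (fun i => succ u i = v), g (succ u i) := by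
    rw [Finset.sum_fiberwise_of_maps_to (fun i _ => Finset.mem_univ (succ u i))]
  rw [h1, Finset.sum_div]
  refine Finset.sum_congr rfl fun v _ => ?_
  have h2 : ∑ i ∈ (Finset.range (d u)).filter (fun i => succ u i = v), g (succ u i)
      = ∑ i ∈ (Finset.range (d u)).filter (fun i => succ u i = v), g v :=
    Finset.sum_congr rfl fun i hi => by rw [(Finset.mem_filter.mp hi).2]
  rw [h2, hp u v, Finset.sum_const, nsmul_eq_mul]
  have : (d u : ℝ) ≠ 0 := Nat.cast_ne_zero.mpr (hd u).ne'
  field_simp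

/-- **Hitting times** (Theorem `hit-time`).  `V` is finite; `k(v) = E_v T_b` is
characterized by `k(b) = 0` and `k(u) = 1 + ∑_v p(u,v) k(v)` for `u ≠ b`. -/
theorem rotor_hitting_time {V : Type*} [Fintype V]
    (d : V → ℕ) (succ : V → ℕ → V) (p : V → V → ℝ)
    (hreal : Realizes d succ p)
    (a b : V) (hab : a ≠ b) (hpb : p b a = 1)
    (k : V → ℝ) (hkb : k b = 0)
    (hk : ∀ u, u ≠ b → k u = 1 + ∑ v, p u v * k v)
    (K₂ : ℝ)
    (hK₂ : K₂ = (⨆ v, k v) + (1 / 2) * ∑ u, ∑ v,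
      (if u = b then 0 else (d u : ℝ) * p u v * |k u - k v - 1|))
    (x : ℕ → V) (r : ℕ → V → ℕ) (hwalk : IsRotorWalk d succ x r) (hx0 : x 0 = a)
    (t : ℕ) (hn : 0 < nvisits x t b) :
    |(k a + 1) - (t : ℝ) / (nvisits x t b : ℝ)| ≤ K₂ / (nvisits x t b : ℝ) := by
  obtain ⟨hd, hp⟩ := hreal
  obtain ⟨hr0, hrinc, hrfix, hmove⟩ := hwalk
  -- basic facts about p
  have hpnn : ∀ u v, 0 ≤ p u v := fun u v => by
    rw [hp u v]; positivity
  have hp1 : ∀ u, ∑ v, p u v = 1 := by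
    intro u
    have := realizes_sum d succ p hd hp u (fun _ => 1)
    simp only [mul_one, Finset.sum_const, Finset.card_range, nsmul_eq_mul] at this
    rw [this, div_self (Nat.cast_ne_zero.mpr (hd u).ne')]
  -- all successors of b are a
  have hsuccb : ∀ i, i < d b → succ b i = a := by
    intro i hi
    have hcard : (((Finset.range (d b)).filter fun i => succ b i = a).card : ℝ) = (d b : ℝ) := by
      have := hp b a
      rw [hpb, eq_comm, div_eq_one_iff_eq (Nat.cast_ne_zero.mpr (hd b).ne')] at this
      exact this
    have hcard' : ((Finset.range (d b)).filter fun i => succ b i = a).card = d b :=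
      Nat.cast_injective hcard
    have hsub : (Finset.range (d b)).filter (fun i => succ b i = a) = Finset.range (d b) :=
      Finset.eq_of_subset_of_card_le (Finset.filter_subset _ _)
        (by rw [hcard', Finset.card_range])
    have : i ∈ (Finset.range (d b)).filter (fun i => succ b i = a) := by
      rw [hsub]; exact Finset.mem_range.mpr hi
    exact (Finset.mem_filter.mp this).2
  have hstepb : ∀ s, x s = b → x (s+1) = a := by
    intro s hs
    have h1 : r (s+1) (x s) = (r s (x s) + 1) % d (x s) := hrinc s
    rw [hmove s, hs]
    rw [hs] at h1
    rw [h1]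
    exact hsuccb _ (Nat.mod_lt _ (hd b))
  -- rotor position determined by visit count
  have hrot : ∀ s u, r s u = (r 0 u + nvisits x s u) % d u := by
    intro s
    induction s with
    | zero => intro u; rw [nvisits_zero, Nat.add_zero, Nat.mod_eq_of_lt (hr0 u)]
    | succ s ih =>
      intro u
      by_cases hc : u = x s
      · subst hc
        rw [hrinc s, ih (x s), nvisits_succ, if_pos rfl, Nat.mod_add_mod, Nat.add_assoc]
      · rw [hrfix s u hc, ih u, nvisits_succ, if_neg (fun h => hc h.symm), Nat.add_zero]
  -- nonnegativity of k
  have hVne : Nonempty V := ⟨a⟩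
  have hknn : ∀ v, 0 ≤ k v := by
    obtain ⟨u0, -, hu0⟩ := Finset.exists_mem_eq_inf' (Finset.univ_nonempty (α := V)) k
    have hmle : ∀ v, Finset.univ.inf' Finset.univ_nonempty k ≤ k v :=
      fun v => Finset.inf'_le k (Finset.mem_univ v)
    rcases eq_or_ne u0 b with h | h
    · intro v
      have := hmle v
      rw [hu0, h, hkb] at this
      exact this
    · exfalso
      have h1 : k u0 = 1 + ∑ v, p u0 v * k v := hk u0 h
      have h2 : Finset.univ.inf' Finset.univ_nonempty k ≤ ∑ v, p u0 v * k v := by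
        calc Finset.univ.inf' Finset.univ_nonempty k
            = (∑ v, p u0 v) * Finset.univ.inf' Finset.univ_nonempty k := by rw [hp1]; ring
          _ = ∑ v, p u0 v * Finset.univ.inf' Finset.univ_nonempty k := by rw [Finset.sum_mul]
          _ ≤ ∑ v, p u0 v * k v :=
            Finset.sum_le_sum fun v _ => mul_le_mul_of_nonneg_left (hmle v) (hpnn u0 v)
      rw [← hu0] at h1
      linarith
  have hsup : ∀ v, k v ≤ ⨆ v, k v :=
    fun v => le_ciSup (Set.Finite.bddAbove (Set.finite_range k)) v
  -- the cycle sums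
  set f : V → V → ℝ := fun u w => k w - k u + 1 with hf
  set F : V → ℕ → ℝ :=
    fun u m => ∑ i ∈ Finset.range m, f u (succ u ((r 0 u + 1 + i) % d u)) with hF
  have hzero : ∀ u, u ≠ b → ∑ j ∈ Finset.range (d u), f u (succ u j) = 0 := by
    intro u hu
    have h1 := realizes_sum d succ p hd hp u (fun w => f u w)
    have h2 : ∑ v, p u v * f u v = 0 := by
      simp only [hf]
      have e1 : ∀ v ∈ Finset.univ, p u v * (k v - k u + 1) = p u v * k v - (k u - 1) * p u v :=
        fun v _ => by ring
      rw [Finset.sum_congr rfl e1, Finset.sum_sub_distrib, ← Finset.mul_sum, hp1, hk u hu]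
      ring
    rw [h2] at h1
    rcases div_eq_zero_iff.mp h1.symm with h | h
    · exact h
    · exact absurd h (Nat.cast_ne_zero.mpr (hd u).ne')
  have hcyc : ∀ u, u ≠ b → ∀ c, ∑ i ∈ Finset.range (d u), f u (succ u ((c + i) % d u)) = 0 := by
    intro u hu c
    exact (sum_range_mod_shift (d u) c (hd u) (fun j => f u (succ u j))).trans (hzero u hu)
  -- step identity
  have hx1 : ∀ T, x (T+1) = succ (x T) ((r 0 (x T) + 1 + nvisits x T (x T)) % d (x T)) := by
    intro T
    rw [hmove T, hrinc T, hrot T (x T), Nat.mod_add_mod]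
    congr 2
    omega
  -- main induction
  have main : ∀ T, k (x T) - k a = (nvisits x T b : ℝ) * (k a + 1) - T
      + ∑ u, (if u = b then 0 else F u (nvisits x T u)) := by
    intro T
    induction T with
    | zero => simp [hx0, nvisits_zero, hF]
    | succ T ih =>
      have hS : ∀ u, (if u = b then 0 else F u (nvisits x (T+1) u))
          = (if u = b then 0 else F u (nvisits x T u))
            + (if u = x T then (if u = b then 0 else f u (x (T+1))) else 0) := by
        intro u
        by_cases hub : u = b
        · simp [hub]
        · by_cases hux : u = x T
          · rw [if_neg hub, if_neg hub, if_pos hux, if_neg hub]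
            rw [nvisits_succ, if_pos hux.symm]
            simp only [hF]
            rw [Finset.sum_range_succ]
            congr 1
            rw [hux, hx1 T]
          · rw [if_neg hub, if_neg hub, if_neg hux, nvisits_succ,
              if_neg (fun h => hux h.symm), add_zero, add_zero]
      have hSsum : ∑ u, (if u = b then 0 else F u (nvisits x (T+1) u))
          = (∑ u, (if u = b then 0 else F u (nvisits x T u)))
            + (if x T = b then 0 else f (x T) (x (T+1))) := by
        rw [Finset.sum_congr rfl (fun u _ => hS u), Finset.sum_add_distrib]
        congr 1
        rw [Finset.sum_ite_eq' Finset.univ (x T) (fun u => if u = b then 0 else f u (x (T+1)))]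
        simp
      rcases eq_or_ne (x T) b with hb | hb
      · have hx1' : x (T+1) = a := hstepb T hb
        have ih' := ih
        rw [hb, hkb] at ih'
        rw [hSsum, if_pos hb, hx1', nvisits_succ x T b, if_pos hb]
        push_cast
        linarith
      · rw [hSsum, if_neg hb, nvisits_succ x T b, if_neg hb, add_zero]
        simp only [hf]
        push_cast
        linarith
  -- periodicity and bound for F
  have hFadd : ∀ u, u ≠ b → ∀ m, F u (m + d u) = F u m := by
    intro u hu m
    simp only [hF]
    rw [Finset.sum_range_add]
    have e : ∀ i ∈ Finset.range (d u),
        f u (succ u ((r 0 u + 1 + (m + i)) % d u))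
          = f u (succ u ((r 0 u + 1 + m + i) % d u)) := by
      intro i _
      have e2 : r 0 u + 1 + (m + i) = r 0 u + 1 + m + i := by omega
      rw [e2]
    rw [Finset.sum_congr rfl e, hcyc u hu (r 0 u + 1 + m), add_zero]
  have hFmod : ∀ u, u ≠ b → ∀ m, F u m = F u (m % d u) := by
    intro u hu m
    have hq : ∀ q s, F u (s + d u * q) = F u s := by
      intro q
      induction q with
      | zero => intro s; simp
      | succ q ih =>
        intro s
        have e : s + d u * (q+1) = (s + d u * q) + d u := by ring
        rw [e, hFadd u hu, ih]
    calc F u m = F u (m % d u + d u * (m / d u)) := by rw [Nat.mod_add_div]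
      _ = F u (m % d u) := hq _ _
  have hFbound : ∀ u, u ≠ b → ∀ m,
      |F u m| ≤ (1/2) * ∑ j ∈ Finset.range (d u), |f u (succ u j)| := by
    intro u hu m
    rw [hFmod u hu m]
    have hm'lt : m % d u ≤ d u := le_of_lt (Nat.mod_lt _ (hd u))
    have hdecomp : ∑ i ∈ Finset.range (d u), f u (succ u ((r 0 u + 1 + i) % d u))
        = F u (m % d u) + ∑ i ∈ Finset.Ico (m % d u) (d u), f u (succ u ((r 0 u + 1 + i) % d u)) := by
      simp only [hF]
      rw [Finset.range_eq_Ico, ← Finset.sum_Ico_consecutive _ (Nat.zero_le (m % d u)) hm'lt,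
        ← Finset.range_eq_Ico]
    have htot := hcyc u hu (r 0 u + 1)
    have hneg : F u (m % d u) = - ∑ i ∈ Finset.Ico (m % d u) (d u), f u (succ u ((r 0 u + 1 + i) % d u)) := by
      rw [hdecomp] at htot
      linarith
    have hb1 : |F u (m % d u)| ≤ ∑ i ∈ Finset.range (m % d u), |f u (succ u ((r 0 u + 1 + i) % d u))| := by
      simp only [hF]
      exact Finset.abs_sum_le_sum_abs _ _
    have hb2 : |F u (m % d u)| ≤ ∑ i ∈ Finset.Ico (m % d u) (d u), |f u (succ u ((r 0 u + 1 + i) % d u))| := by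
      rw [hneg, abs_neg]
      exact Finset.abs_sum_le_sum_abs _ _
    have habs : ∑ i ∈ Finset.range (d u), |f u (succ u ((r 0 u + 1 + i) % d u))|
        = ∑ j ∈ Finset.range (d u), |f u (succ u j)| :=
      sum_range_mod_shift (d u) (r 0 u + 1) (hd u) (fun j => |f u (succ u j)|)
    have habs2 : ∑ i ∈ Finset.range (d u), |f u (succ u ((r 0 u + 1 + i) % d u))|
        = (∑ i ∈ Finset.range (m % d u), |f u (succ u ((r 0 u + 1 + i) % d u))|)
          + ∑ i ∈ Finset.Ico (m % d u) (d u), |f u (succ u ((r 0 u + 1 + i) % d u))| := by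
      rw [Finset.range_eq_Ico, ← Finset.sum_Ico_consecutive _ (Nat.zero_le (m % d u)) hm'lt,
        ← Finset.range_eq_Ico]
    linarith
  -- assemble
  have hmain := main t
  have hNpos : (0:ℝ) < (nvisits x t b : ℝ) := by exact_mod_cast hn
  have hSbound : |∑ u, (if u = b then 0 else F u (nvisits x t u))|
      ≤ ∑ u, (if u = b then 0 else (1/2) * ((d u : ℝ) * ∑ v, p u v * |k u - k v - 1|)) := by
    refine (Finset.abs_sum_le_sum_abs _ _).trans (Finset.sum_le_sum fun u _ => ?_)
    by_cases hu : u = b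
    · simp [hu]
    · rw [if_neg hu, if_neg hu]
      refine (hFbound u hu _).trans ?_
      have h1 := realizes_sum d succ p hd hp u (fun w => |k u - k w - 1|)
      have h2 : ∑ j ∈ Finset.range (d u), |f u (succ u j)|
          = ∑ j ∈ Finset.range (d u), |k u - k (succ u j) - 1| := by
        refine Finset.sum_congr rfl fun j _ => ?_
        simp only [hf]
        rw [← abs_neg]
        congr 1
        ring
      rw [h2]
      have h3 : ∑ j ∈ Finset.range (d u), |k u - k (succ u j) - 1|
          = (d u : ℝ) * ∑ v, p u v * |k u - k v - 1| := by
        rw [h1, mul_comm, div_mul_cancel₀ _ (Nat.cast_ne_zero.mpr (hd u).ne')]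
      rw [h3]
  have key : |(nvisits x t b : ℝ) * (k a + 1) - t| ≤ K₂ := by
    have h1 : (nvisits x t b : ℝ) * (k a + 1) - t
        = (k (x t) - k a) - ∑ u, (if u = b then 0 else F u (nvisits x t u)) := by
      linarith
    have h2 : |k (x t) - k a| ≤ ⨆ v, k v := by
      rcases le_total (k a) (k (x t)) with h | h
      · rw [abs_of_nonneg (by linarith)]; linarith [hsup (x t), hknn a]
      · rw [abs_of_nonpos (by linarith)]; linarith [hsup a, hknn (x t)]
    have h3 : (1/2) * ∑ u, ∑ v, (if u = b then 0 else (d u:ℝ) * p u v * |k u - k v - 1|)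
        = ∑ u, (if u = b then 0 else (1/2) * ((d u : ℝ) * ∑ v, p u v * |k u - k v - 1|)) := by
      rw [Finset.mul_sum]
      refine Finset.sum_congr rfl fun u _ => ?_
      by_cases hu : u = b
      · simp [hu]
      · simp only [if_neg hu]
        rw [Finset.mul_sum, Finset.mul_sum, Finset.mul_sum]
        refine Finset.sum_congr rfl fun v _ => ?_
        ring
    rw [h1, hK₂, h3]
    calc |(k (x t) - k a) - ∑ u, (if u = b then 0 else F u (nvisits x t u))|
        ≤ |k (x t) - k a| + |∑ u, (if u = b then 0 else F u (nvisits x t u))| := abs_sub _ _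
      _ ≤ (⨆ v, k v) + ∑ u, (if u = b then 0 else (1/2) * ((d u : ℝ) * ∑ v, p u v * |k u - k v - 1|)) :=
          add_le_add h2 hSbound
  have hgoal : (k a + 1) - (t:ℝ) / (nvisits x t b : ℝ)
      = ((nvisits x t b : ℝ) * (k a + 1) - t) / (nvisits x t b : ℝ) := by
    field_simp
  rw [hgoal, abs_div, abs_of_pos hNpos]
  gcongr
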